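/- Let u ∈ k^*, let γ, δ ≥ 1 be integers, let α ∈ Aff_3(k) \ B, and let α' be a lift of α which satisfies condition (C) with data m4,m5,m6 ≥ 0 and n4,n5,n6 ≥ 1. Set γ' := m5·δ + m6·γ and δ' := n5·δ + n6·γ. Then γ' ≥ γ, δ' ≥ δ, and (φ'_u ∘ α')(P_{γ,δ}) ⊆ P_{γ',δ'}. -/

import Mathlib

open MvPolynomial

noncomputable section

namespace YasudaPaper

variable {k : Type*} [Field k]

/-- `f := x1*x3 - x2^2` (variables: `X 0 = x1, X 1 = x2, X 2 = x3`). -/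
def fP : MvPolynomial (Fin 3) k := X 0 * X 2 - X 1 ^ 2

/-- `r := x2*f + x1^2`. -/
def rP : MvPolynomial (Fin 3) k := X 1 * fP + X 0 ^ 2

/-- `g := x3*f^2 + 2*x1*x2*f + x1^3`. -/
def gP : MvPolynomial (Fin 3) k := X 2 * fP ^ 2 + 2 * X 0 * X 1 * fP + X 0 ^ 3

/-- The Jacobian derivation `Δ = Δ_{(f,g)}`, `h ↦ det ∂(f,g,h)/∂(x1,x2,x3)`. -/
def Del (h : MvPolynomial (Fin 3) k) : MvPolynomial (Fin 3) k :=
  Matrix.det !![pderiv 0 fP, pderiv 1 fP, pderiv 2 fP;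
                pderiv 0 gP, pderiv 1 gP, pderiv 2 gP;
                pderiv 0 h,  pderiv 1 h,  pderiv 2 h]

/-- `φ = exp D`: for every `h` and every `N` with `D^[N] h = 0`,
    `φ h = ∑_{i<N} D^i(h)/i!`.  (For a locally nilpotent `D` this characterizes
    the exponential automorphism.) -/
def IsExpOf {σ : Type*} (D : MvPolynomial σ k → MvPolynomial σ k)
    (φ : MvPolynomial σ k ≃ₐ[k] MvPolynomial σ k) : Prop :=
  ∀ (h : MvPolynomial σ k) (N : ℕ), D^[N] h = 0 →
    φ h = ∑ i ∈ Finset.range N, (Nat.factorial i : k)⁻¹ • D^[i] h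

/-- `α` is an affine automorphism: `α(x_i) = ∑_j a_{j,i} x_j + b_i` with `A ∈ GL₃(k)`. -/
def IsAffine (α : MvPolynomial (Fin 3) k ≃ₐ[k] MvPolynomial (Fin 3) k) : Prop :=
  ∃ (A : Matrix (Fin 3) (Fin 3) k) (b : Fin 3 → k), IsUnit A.det ∧
    ∀ i : Fin 3, α (X i) = (∑ j : Fin 3, C (A j i) * X j) + C (b i)

/-- `Aff_3(k)` as a set of automorphisms. -/
def AffSet : Set (MvPolynomial (Fin 3) k ≃ₐ[k] MvPolynomial (Fin 3) k) := {α | IsAffine α}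

/-- `α` is a triangular automorphism: `α(x_i) = a_i x_i + f_i(x_1,…,x_{i-1})`, `a_i ≠ 0`. -/
def IsTriangular (α : MvPolynomial (Fin 3) k ≃ₐ[k] MvPolynomial (Fin 3) k) : Prop :=
  ∃ (a : Fin 3 → k) (p : Fin 3 → MvPolynomial (Fin 3) k),
    (∀ i, a i ≠ 0) ∧ (∀ i, p i ∈ MvPolynomial.supported k {j | j < i}) ∧
    (∀ i, α (X i) = C (a i) * X i + p i)

/-- `BA_3(k)` as a set of automorphisms. -/
def TriSet : Set (MvPolynomial (Fin 3) k ≃ₐ[k] MvPolynomial (Fin 3) k) := {α | IsTriangular α}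

/-- The tame subgroup `TA_3(k) = ⟨Aff_3(k), BA_3(k)⟩`. -/
def TA : Subgroup (MvPolynomial (Fin 3) k ≃ₐ[k] MvPolynomial (Fin 3) k) :=
  Subgroup.closure (AffSet ∪ TriSet)

/-- `β = β_u = (u^3 x1, u^2 x2, u x3)`. -/
def IsBeta (u : k) (β : MvPolynomial (Fin 3) k ≃ₐ[k] MvPolynomial (Fin 3) k) : Prop :=
  β (X 0) = C (u ^ 3) * X 0 ∧ β (X 1) = C (u ^ 2) * X 1 ∧ β (X 2) = C u * X 2

/-- `B = {β_u | u ∈ k^*}`. -/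
def BSet : Set (MvPolynomial (Fin 3) k ≃ₐ[k] MvPolynomial (Fin 3) k) :=
  {β | ∃ u : k, u ≠ 0 ∧ IsBeta u β}

/-! Six-variable ring `k[x1,x2,x3,t_r,t_f,t_g]`:
variables `X 0 = x1, X 1 = x2, X 2 = x3, X 3 = t_r, X 4 = t_f, X 5 = t_g`. -/

/-- The inclusion of variable index sets. -/
def ι36 : Fin 3 → Fin 6 := Fin.castLE (by norm_num)

/-- The embedding `k[x1,x2,x3] → k[x1,x2,x3,t_r,t_f,t_g]`. -/
def embP : MvPolynomial (Fin 3) k →ₐ[k] MvPolynomial (Fin 6) k := rename ι36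

/-- The substitution map `π : t_r ↦ r, t_f ↦ f, t_g ↦ g` (fixing `x1,x2,x3`). -/
def piMap : MvPolynomial (Fin 6) k →ₐ[k] MvPolynomial (Fin 3) k :=
  aeval ![X 0, X 1, X 2, rP, fP, gP]

/-- The triangular derivation
`Δ' = -2 t_r t_f ∂/∂x1 + (4 x1 t_r - t_g) ∂/∂x2 + (6 x2 t_r + 2 t_f²) ∂/∂x3 - t_f t_g ∂/∂t_r`. -/
def Del' (p : MvPolynomial (Fin 6) k) : MvPolynomial (Fin 6) k :=
  (-(2 * X 3 * X 4)) * pderiv 0 p + (4 * X 0 * X 3 - X 5) * pderiv 1 p +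
  (6 * X 1 * X 3 + 2 * X 4 ^ 2) * pderiv 2 p + (-(X 4 * X 5)) * pderiv 3 p

/-- The weight `w1 = (1,2,3,1,0,1)`. -/
def w1 : Fin 6 → ℕ := ![1, 2, 3, 1, 0, 1]

/-- The weight `w2 = (0,0,0,0,1,0)`. -/
def w2 : Fin 6 → ℕ := ![0, 0, 0, 0, 1, 0]

/-- The sixth cyclic lexicographic order on exponent vectors: first compare the
exponent of `t_g`, then lexicographically the exponents of `x1,x2,x3,t_r,t_f`. -/
def cyclicLt (a b : Fin 6 →₀ ℕ) : Prop :=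
  a 5 < b 5 ∨ (a 5 = b 5 ∧ ∃ m : Fin 5,
    (∀ l : Fin 5, l < m → a l.castSucc = b l.castSucc) ∧ a m.castSucc < b m.castSucc)

/-- The leading monomial of `p` (for the sixth cyclic lexicographic order) is `m`. -/
def LeadMonIs (p : MvPolynomial (Fin 6) k) (m : Fin 6 →₀ ℕ) : Prop :=
  m ∈ p.support ∧ ∀ m' ∈ p.support, m' ≠ m → cyclicLt m' m

/-- The exponent vector of the monomial `t_f^δ t_g^γ`. -/
def tfMon (γ δ : ℕ) : Fin 6 →₀ ℕ := Finsupp.single 4 δ + Finsupp.single 5 γ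

/-- The set `P_{γ,δ}`. -/
def Pset (γ δ : ℕ) : Set (MvPolynomial (Fin 6) k) :=
  {p | p ≠ 0 ∧ weightedTotalDegree w1 p ≤ γ ∧ weightedTotalDegree w2 p ≤ δ ∧
    LeadMonIs p (tfMon γ δ)}

/-- `α'` is a lift of `α`. -/
def IsLift (α : MvPolynomial (Fin 3) k ≃ₐ[k] MvPolynomial (Fin 3) k)
    (α' : MvPolynomial (Fin 6) k →ₐ[k] MvPolynomial (Fin 6) k) : Prop :=
  (∀ i : Fin 3, α' (X (ι36 i)) = embP (α (X i))) ∧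
  (∀ p, piMap (α' p) = α (piMap p))

/-- `t = γ_j = max {i | a_{i,j} ≠ 0}` (with rows indexed `1,2,3`). -/
def TypeIs (A : Matrix (Fin 3) (Fin 3) k) (j : Fin 3) (t : ℕ) : Prop :=
  ∃ i : Fin 3, t = (i : ℕ) + 1 ∧ A i j ≠ 0 ∧ ∀ i' : Fin 3, i < i' → A i' j = 0

/-- Condition (C) for a lift `α'` of an affine automorphism of type `(γ1,γ2,γ3)`,
relative to `φ' = exp(uΔ')`. -/
def CondC (γ1 γ2 γ3 : ℕ) (φ' : MvPolynomial (Fin 6) k ≃ₐ[k] MvPolynomial (Fin 6) k)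
    (α' : MvPolynomial (Fin 6) k →ₐ[k] MvPolynomial (Fin 6) k) : Prop :=
  ∃ m4 m5 m6 n4 n5 n6 : ℕ,
    1 ≤ n4 ∧ 1 ≤ n5 ∧ 1 ≤ n6 ∧
    φ' (α' (X 3)) ∈ Pset m4 n4 ∧
    φ' (α' (X 4)) ∈ Pset m5 n5 ∧
    φ' (α' (X 5)) ∈ Pset m6 n6 ∧
    γ1 ≤ m6 ∧ γ2 ≤ 2 * m6 ∧ γ3 ≤ 3 * m6 ∧ m4 ≤ m6 ∧
    γ1 + 1 ≤ n6 - 1 ∧ γ2 + 1 ≤ 2 * (n6 - 1) ∧ γ3 + 1 ≤ 3 * (n6 - 1) ∧ n4 ≤ n6 - 1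

/-- The image of `x_j` under the affine map given by `(A, d)`, inside the six-variable ring. -/
def affImg (A : Matrix (Fin 3) (Fin 3) k) (d : Fin 3 → k) (j : Fin 3) :
    MvPolynomial (Fin 6) k :=
  (∑ i : Fin 3, C (A i j) * X (ι36 i)) + C (d j)

/-- The image of `t_f` under the lift `α̂`:
`α̂(t_f) = α(f) + (a_{1,1}a_{3,3} - 2a_{1,2}a_{3,2} + a_{1,3}a_{3,1})(t_f - f)`. -/
def hatTf (A : Matrix (Fin 3) (Fin 3) k) (d : Fin 3 → k) : MvPolynomial (Fin 6) k :=
  (affImg A d 0 * affImg A d 2 - affImg A d 1 ^ 2) +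
    C (A 0 0 * A 2 2 - 2 * (A 0 1 * A 2 1) + A 0 2 * A 2 0) *
      (X 4 - (X 0 * X 2 - X 1 ^ 2))

/-- The lift `α̂` of the affine automorphism given by `(A, d)`:
`α̂(x_i) = α(x_i)`, `α̂(t_f)` as in `hatTf`, `α̂(t_r) = α̂(x2 t_f + x1²)`,
`α̂(t_g) = α̂(x3 t_f² + 2 x1 x2 t_f + x1³)`. -/
def hatLift (A : Matrix (Fin 3) (Fin 3) k) (d : Fin 3 → k) :
    MvPolynomial (Fin 6) k →ₐ[k] MvPolynomial (Fin 6) k :=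
  aeval ![affImg A d 0, affImg A d 1, affImg A d 2,
    affImg A d 1 * hatTf A d + affImg A d 0 ^ 2,
    hatTf A d,
    affImg A d 2 * hatTf A d ^ 2 + 2 * affImg A d 0 * affImg A d 1 * hatTf A d +
      affImg A d 0 ^ 3]

/-! ### Auxiliary development for Statement 13 -/

section Aux

variable {k : Type*} [Field k]

/-! #### The cyclic lexicographic order -/

def keyv (a : Fin 6 →₀ ℕ) : ℕ×ℕ×ℕ×ℕ×ℕ×ℕ := (a 5, a 0, a 1, a 2, a 3, a 4)

def lt6 (x y : ℕ×ℕ×ℕ×ℕ×ℕ×ℕ) : Prop :=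
  x.1 < y.1 ∨ (x.1 = y.1 ∧ (x.2.1 < y.2.1 ∨ (x.2.1 = y.2.1 ∧
    (x.2.2.1 < y.2.2.1 ∨ (x.2.2.1 = y.2.2.1 ∧
    (x.2.2.2.1 < y.2.2.2.1 ∨ (x.2.2.2.1 = y.2.2.2.1 ∧
    (x.2.2.2.2.1 < y.2.2.2.2.1 ∨ (x.2.2.2.2.1 = y.2.2.2.2.1 ∧
      x.2.2.2.2.2 < y.2.2.2.2.2)))))))))

lemma cyclicLt_iff {a b : Fin 6 →₀ ℕ} : cyclicLt a b ↔ lt6 (keyv a) (keyv b) := by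
  constructor
  · rintro (h | ⟨h5, m, h1, h2⟩)
    · exact Or.inl h
    right; refine ⟨h5, ?_⟩
    fin_cases m
    · exact Or.inl h2
    · exact Or.inr ⟨h1 0 (by decide), Or.inl h2⟩
    · exact Or.inr ⟨h1 0 (by decide), Or.inr ⟨h1 1 (by decide), Or.inl h2⟩⟩
    · exact Or.inr ⟨h1 0 (by decide), Or.inr ⟨h1 1 (by decide), Or.inr ⟨h1 2 (by decide),
        Or.inl h2⟩⟩⟩
    · exact Or.inr ⟨h1 0 (by decide), Or.inr ⟨h1 1 (by decide), Or.inr ⟨h1 2 (by decide),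
        Or.inr ⟨h1 3 (by decide), h2⟩⟩⟩⟩
  · rintro (h | ⟨h5, h⟩)
    · exact Or.inl h
    right; refine ⟨h5, ?_⟩
    rcases h with h | ⟨e0, h | ⟨e1, h | ⟨e2, h | ⟨e3, h⟩⟩⟩⟩
    · exact ⟨0, fun l hl => absurd hl (by simp), h⟩
    · exact ⟨1, fun l hl => by
        fin_cases l
        · exact e0
        all_goals exact absurd hl (by decide), h⟩
    · exact ⟨2, fun l hl => by
        fin_cases l
        · exact e0
        · exact e1
        all_goals exact absurd hl (by decide), h⟩
    · exact ⟨3, fun l hl => by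
        fin_cases l
        · exact e0
        · exact e1
        · exact e2
        all_goals exact absurd hl (by decide), h⟩
    · exact ⟨4, fun l hl => by
        fin_cases l
        · exact e0
        · exact e1
        · exact e2
        · exact e3
        · exact absurd hl (by decide), h⟩

lemma cyclicLt_irrefl (a : Fin 6 →₀ ℕ) : ¬ cyclicLt a a := by
  rw [cyclicLt_iff]; unfold lt6; omega

lemma cyclicLt_trans {a b c : Fin 6 →₀ ℕ} (h1 : cyclicLt a b) (h2 : cyclicLt b c) :
    cyclicLt a c := by
  rw [cyclicLt_iff] at *; unfold lt6 at *; omega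

lemma keyv_add (a b : Fin 6 →₀ ℕ) : keyv (a+b) =
    ((keyv a).1 + (keyv b).1, (keyv a).2.1 + (keyv b).2.1, (keyv a).2.2.1 + (keyv b).2.2.1,
     (keyv a).2.2.2.1 + (keyv b).2.2.2.1, (keyv a).2.2.2.2.1 + (keyv b).2.2.2.2.1,
     (keyv a).2.2.2.2.2 + (keyv b).2.2.2.2.2) := by
  simp [keyv, Finsupp.add_apply]

lemma cyclicLt_add_right {a b : Fin 6 →₀ ℕ} (c : Fin 6 →₀ ℕ) (h : cyclicLt a b) :
    cyclicLt (a+c) (b+c) := by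
  rw [cyclicLt_iff] at *; rw [keyv_add, keyv_add]; unfold lt6 at *; dsimp only; omega

lemma cyclicLt_of_add {a b c d : Fin 6 →₀ ℕ} (ha : a = c ∨ cyclicLt a c)
    (hb : b = d ∨ cyclicLt b d) (hne : ¬ (a = c ∧ b = d)) : cyclicLt (a+b) (c+d) := by
  rcases ha with rfl | ha
  · rcases hb with rfl | hb
    · exact absurd ⟨rfl, rfl⟩ hne
    · rw [add_comm a b, add_comm a d]; exact cyclicLt_add_right a hb
  · rcases hb with rfl | hb
    · exact cyclicLt_add_right b ha
    · exact cyclicLt_trans (cyclicLt_add_right b ha) (by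
        rw [add_comm c b, add_comm c d]; exact cyclicLt_add_right c hb)

lemma cyclicLt_of_five {a b : Fin 6 →₀ ℕ} (h : a 5 < b 5) : cyclicLt a b := Or.inl h

/-! #### weights -/

lemma w1_const : (w1 0 = 1) ∧ (w1 1 = 2) ∧ (w1 2 = 3) ∧ (w1 3 = 1) ∧ (w1 4 = 0) ∧ (w1 5 = 1) :=
  ⟨rfl, rfl, rfl, rfl, rfl, rfl⟩

def wdeg1 (v : Fin 6 →₀ ℕ) : ℕ := v 0 + 2*(v 1) + 3*(v 2) + v 3 + v 5
def wdeg2 (v : Fin 6 →₀ ℕ) : ℕ := v 4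

lemma weight_w1 (v : Fin 6 →₀ ℕ) : Finsupp.weight w1 v = wdeg1 v := by
  rw [Finsupp.weight_apply, Finsupp.sum_fintype]
  · rw [Fin.sum_univ_six]
    show v 0 • 1 + v 1 • 2 + v 2 • 3 + v 3 • 1 + v 4 • 0 + v 5 • 1 = _
    simp only [smul_eq_mul, wdeg1]
    ring
  · intro i; simp

lemma weight_w2 (v : Fin 6 →₀ ℕ) : Finsupp.weight w2 v = wdeg2 v := by
  rw [Finsupp.weight_apply, Finsupp.sum_fintype]
  · rw [Fin.sum_univ_six]
    show v 0 • 0 + v 1 • 0 + v 2 • 0 + v 3 • 0 + v 4 • 1 + v 5 • 0 = _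
    simp only [smul_eq_mul, wdeg2]
    ring
  · intro i; simp

lemma wdeg1_add (a b : Fin 6 →₀ ℕ) : wdeg1 (a+b) = wdeg1 a + wdeg1 b := by
  simp [wdeg1, Finsupp.add_apply]; ring
lemma wdeg2_add (a b : Fin 6 →₀ ℕ) : wdeg2 (a+b) = wdeg2 a + wdeg2 b := by
  simp [wdeg2, Finsupp.add_apply]

/-! #### tfMon facts -/

lemma tfMon_apply (γ δ : ℕ) : (tfMon γ δ) 0 = 0 ∧ (tfMon γ δ) 1 = 0 ∧ (tfMon γ δ) 2 = 0
    ∧ (tfMon γ δ) 3 = 0 ∧ (tfMon γ δ) 4 = δ ∧ (tfMon γ δ) 5 = γ := by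
  refine ⟨?_, ?_, ?_, ?_, ?_, ?_⟩ <;> simp [tfMon, Finsupp.single_apply]

lemma keyv_tfMon (γ δ : ℕ) : keyv (tfMon γ δ) = (γ, 0, 0, 0, 0, δ) := by
  simp [keyv, tfMon, Finsupp.single_apply]

lemma wdeg1_tfMon (γ δ : ℕ) : wdeg1 (tfMon γ δ) = γ := by
  simp [wdeg1, tfMon, Finsupp.single_apply]
lemma wdeg2_tfMon (γ δ : ℕ) : wdeg2 (tfMon γ δ) = δ := by
  simp [wdeg2, tfMon, Finsupp.single_apply]

lemma tfMon_zero : tfMon 0 0 = 0 := by simp [tfMon]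

lemma tfMon_add (a b c d : ℕ) : tfMon a b + tfMon c d = tfMon (a+c) (b+d) := by
  simp only [tfMon, Finsupp.single_add]
  abel

lemma tfMon_smul (n a b : ℕ) : n • tfMon a b = tfMon (n*a) (n*b) := by
  induction n with
  | zero => simp [tfMon_zero]
  | succ n ih =>
    rw [succ_nsmul, ih, tfMon_add]
    ring_nf

lemma tfMon_lt_tfMon {G H γ δ : ℕ} (h : G < γ ∨ (G = γ ∧ H < δ)) :
    cyclicLt (tfMon G H) (tfMon γ δ) := by
  rw [cyclicLt_iff, keyv_tfMon, keyv_tfMon]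
  unfold lt6; dsimp only; omega

lemma cyclicLt_tfMon_cases {e : Fin 6 →₀ ℕ} {γ δ : ℕ} (h : cyclicLt e (tfMon γ δ)) :
    e 5 < γ ∨ (e 5 = γ ∧ e 0 = 0 ∧ e 1 = 0 ∧ e 2 = 0 ∧ e 3 = 0 ∧ e 4 < δ) := by
  rw [cyclicLt_iff, keyv_tfMon] at h
  unfold lt6 at h; unfold keyv at h; dsimp only at h
  omega

/-! #### The `Good` predicate -/

def Good (γ δ : ℕ) (m : Fin 6 →₀ ℕ) (p : MvPolynomial (Fin 6) k) : Prop :=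
  coeff m p ≠ 0 ∧ ∀ v ∈ p.support, wdeg1 v ≤ γ ∧ wdeg2 v ≤ δ ∧ (v = m ∨ cyclicLt v m)

def Small (γ δ : ℕ) (m : Fin 6 →₀ ℕ) (q : MvPolynomial (Fin 6) k) : Prop :=
  ∀ v ∈ q.support, wdeg1 v ≤ γ ∧ wdeg2 v ≤ δ ∧ cyclicLt v m

lemma Good.mono {γ δ γ' δ' : ℕ} {m : Fin 6 →₀ ℕ} {p : MvPolynomial (Fin 6) k}
    (h : Good γ δ m p) (h1 : γ ≤ γ') (h2 : δ ≤ δ') : Good γ' δ' m p :=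
  ⟨h.1, fun v hv => ⟨(h.2 v hv).1.trans h1, (h.2 v hv).2.1.trans h2, (h.2 v hv).2.2⟩⟩

lemma Good.mul {γ δ γ' δ' : ℕ} {m m' : Fin 6 →₀ ℕ} {p q : MvPolynomial (Fin 6) k}
    (hp : Good γ δ m p) (hq : Good γ' δ' m' q) :
    Good (γ+γ') (δ+δ') (m+m') (p*q) := by
  constructor
  · rw [coeff_mul]
    rw [Finset.sum_eq_single_of_mem (m, m') (Finset.HasAntidiagonal.mem_antidiagonal.mpr rfl)]
    · exact mul_ne_zero hp.1 hq.1
    · rintro ⟨a, b⟩ hab hne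
      rw [Finset.HasAntidiagonal.mem_antidiagonal] at hab
      by_contra hc
      have ha : a ∈ p.support := by
        rw [mem_support_iff]; intro h0; exact hc (by simp [h0])
      have hb : b ∈ q.support := by
        rw [mem_support_iff]; intro h0; exact hc (by simp [h0])
      have hlt : cyclicLt (a+b) (m+m') := by
        apply cyclicLt_of_add (hp.2 a ha).2.2 (hq.2 b hb).2.2
        rintro ⟨rfl, rfl⟩; exact hne rfl
      rw [hab] at hlt
      exact cyclicLt_irrefl _ hlt
  · intro v hv
    rw [mem_support_iff, coeff_mul] at hv
    obtain ⟨⟨a, b⟩, hab, hne⟩ := Finset.exists_ne_zero_of_sum_ne_zero hv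
    rw [Finset.HasAntidiagonal.mem_antidiagonal] at hab
    have ha : a ∈ p.support := by
      rw [mem_support_iff]; intro h0; exact hne (by simp [h0])
    have hb : b ∈ q.support := by
      rw [mem_support_iff]; intro h0; exact hne (by simp [h0])
    have h1 := hp.2 a ha; have h2 := hq.2 b hb
    refine ⟨?_, ?_, ?_⟩
    · rw [← hab, wdeg1_add]; dsimp only at *; omega
    · rw [← hab, wdeg2_add]; dsimp only at *; omega
    · rw [← hab]
      by_cases he : a = m ∧ b = m'
      · left; rw [he.1, he.2]
      · right; exact cyclicLt_of_add h1.2.2 h2.2.2 he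

lemma good_one : Good (k := k) 0 0 0 1 := by
  refine ⟨by simp, fun v hv => ?_⟩
  rw [mem_support_iff] at hv
  have : v = 0 := by
    by_contra h
    exact hv (by rw [coeff_one, if_neg (fun h0 => h h0.symm)])
  subst this
  exact ⟨le_refl _, le_refl _, Or.inl rfl⟩

lemma Good.pow {γ δ : ℕ} {m : Fin 6 →₀ ℕ} {p : MvPolynomial (Fin 6) k}
    (hp : Good γ δ m p) (n : ℕ) : Good (n*γ) (n*δ) (n • m) (p^n) := by
  induction n with
  | zero => simpa using good_one
  | succ n ih =>
    rw [pow_succ, succ_nsmul, Nat.succ_mul, Nat.succ_mul]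
    exact ih.mul hp

lemma Good.smulC {γ δ : ℕ} {m : Fin 6 →₀ ℕ} {p : MvPolynomial (Fin 6) k} {c : k}
    (hc : c ≠ 0) (hp : Good γ δ m p) : Good γ δ m (C c * p) := by
  refine ⟨by rw [coeff_C_mul]; exact mul_ne_zero hc hp.1, fun v hv => ?_⟩
  apply hp.2
  rw [mem_support_iff] at hv ⊢
  intro h0; exact hv (by rw [coeff_C_mul, h0, mul_zero])

lemma Good.add_small {γ δ : ℕ} {m : Fin 6 →₀ ℕ} {p q : MvPolynomial (Fin 6) k}
    (hp : Good γ δ m p) (hq : Small γ δ m q) : Good γ δ m (p + q) := by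
  have hmq : coeff m q = 0 := by
    by_contra h
    exact cyclicLt_irrefl m (hq m (mem_support_iff.mpr h)).2.2
  refine ⟨by rw [coeff_add, hmq, add_zero]; exact hp.1, fun v hv => ?_⟩
  rcases Finset.mem_union.mp (support_add hv) with h | h
  · exact hp.2 v h
  · exact ⟨(hq v h).1, (hq v h).2.1, Or.inr (hq v h).2.2⟩

lemma small_add_good {γ δ : ℕ} {m : Fin 6 →₀ ℕ} {p q : MvPolynomial (Fin 6) k}
    (hq : Small γ δ m q) (hp : Good γ δ m p) : Good γ δ m (q + p) := by
  rw [add_comm]; exact hp.add_small hq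

lemma small_zero {γ δ : ℕ} {m : Fin 6 →₀ ℕ} : Small γ δ m (0 : MvPolynomial (Fin 6) k) := by
  intro v hv; simp at hv

lemma small_add {γ δ : ℕ} {m : Fin 6 →₀ ℕ} {p q : MvPolynomial (Fin 6) k}
    (hp : Small γ δ m p) (hq : Small γ δ m q) : Small γ δ m (p + q) := by
  intro v hv
  rcases Finset.mem_union.mp (support_add hv) with h | h
  · exact hp v h
  · exact hq v h

lemma Good.small_of_lt {a b γ δ : ℕ} {m n : Fin 6 →₀ ℕ} {q : MvPolynomial (Fin 6) k}
    (hq : Good a b m q) (h1 : a ≤ γ) (h2 : b ≤ δ) (h3 : cyclicLt m n) : Small γ δ n q := by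
  intro v hv
  obtain ⟨hw1, hw2, he⟩ := hq.2 v hv
  refine ⟨hw1.trans h1, hw2.trans h2, ?_⟩
  rcases he with rfl | hlt
  · exact h3
  · exact cyclicLt_trans hlt h3

lemma small_smulC {γ δ : ℕ} {m : Fin 6 →₀ ℕ} {q : MvPolynomial (Fin 6) k} (c : k)
    (hq : Small γ δ m q) : Small γ δ m (C c * q) := by
  intro v hv
  apply hq
  rw [mem_support_iff] at hv ⊢
  intro h0; exact hv (by rw [coeff_C_mul, h0, mul_zero])

lemma good_monomial {e : Fin 6 →₀ ℕ} {c : k} (hc : c ≠ 0) :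
    Good (wdeg1 e) (wdeg2 e) e (monomial e c) := by
  refine ⟨by rwa [coeff_monomial, if_pos rfl], fun v hv => ?_⟩
  rw [mem_support_iff, coeff_monomial] at hv
  by_cases h : e = v
  · subst h; exact ⟨le_refl _, le_refl _, Or.inl rfl⟩
  · exact absurd (by rw [if_neg h]) hv

lemma small_monomial {γ δ : ℕ} {m e : Fin 6 →₀ ℕ} (c : k)
    (h1 : wdeg1 e ≤ γ) (h2 : wdeg2 e ≤ δ) (h3 : cyclicLt e m) :
    Small γ δ m (monomial e c) := by
  intro v hv
  rw [mem_support_iff, coeff_monomial] at hv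
  by_cases h : e = v
  · subst h; exact ⟨h1, h2, h3⟩
  · exact absurd (by rw [if_neg h]) hv

lemma small_sum {γ δ : ℕ} {m : Fin 6 →₀ ℕ} {ι : Type*} [DecidableEq ι] {s : Finset ι}
    {f : ι → MvPolynomial (Fin 6) k} (h : ∀ i ∈ s, Small γ δ m (f i)) :
    Small γ δ m (∑ i ∈ s, f i) := by
  induction s using Finset.induction_on with
  | empty => simpa using small_zero
  | insert _ _ hx ih =>
    rename_i x s
    rw [Finset.sum_insert hx]
    exact small_add (h x (Finset.mem_insert_self x s))
      (ih fun i hi => h i (Finset.mem_insert_of_mem hi))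

lemma good_sum {γ δ : ℕ} {m : Fin 6 →₀ ℕ} {ι : Type*} [DecidableEq ι] {s : Finset ι}
    {f : ι → MvPolynomial (Fin 6) k} {i0 : ι} (hi0 : i0 ∈ s)
    (hg : Good γ δ m (f i0)) (hs : ∀ i ∈ s, i ≠ i0 → Small γ δ m (f i)) :
    Good γ δ m (∑ i ∈ s, f i) := by
  rw [← Finset.add_sum_erase s f hi0]
  exact hg.add_small (small_sum fun i hi =>
    hs i (Finset.mem_of_mem_erase hi) (Finset.ne_of_mem_erase hi))

lemma good_prod {ι : Type*} [DecidableEq ι] {s : Finset ι} {a b : ι → ℕ}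
    {m : ι → Fin 6 →₀ ℕ} {f : ι → MvPolynomial (Fin 6) k}
    (h : ∀ i ∈ s, Good (a i) (b i) (m i) (f i)) :
    Good (∑ i ∈ s, a i) (∑ i ∈ s, b i) (∑ i ∈ s, m i) (∏ i ∈ s, f i) := by
  induction s using Finset.induction_on with
  | empty => simpa using good_one
  | insert _ _ hx ih =>
    rename_i x s
    rw [Finset.sum_insert hx, Finset.sum_insert hx, Finset.sum_insert hx, Finset.prod_insert hx]
    exact (h x (Finset.mem_insert_self x s)).mul
      (ih fun i hi => h i (Finset.mem_insert_of_mem hi))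

/-! #### `Pset` vs `Good` -/

lemma mem_Pset_iff_good {γ δ : ℕ} {p : MvPolynomial (Fin 6) k} :
    p ∈ Pset γ δ ↔ Good γ δ (tfMon γ δ) p := by
  constructor
  · rintro ⟨hne, hw1, hw2, hlm, hall⟩
    refine ⟨mem_support_iff.mp hlm, fun v hv => ?_⟩
    refine ⟨?_, ?_, ?_⟩
    · rw [← weight_w1 v]
      exact le_trans (Finset.le_sup (f := fun s => Finsupp.weight w1 s) hv) hw1
    · rw [← weight_w2 v]
      exact le_trans (Finset.le_sup (f := fun s => Finsupp.weight w2 s) hv) hw2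
    · by_cases h : v = tfMon γ δ
      · exact Or.inl h
      · exact Or.inr (hall v hv h)
  · rintro ⟨hc, hall⟩
    refine ⟨?_, ?_, ?_, mem_support_iff.mpr hc, ?_⟩
    · intro h0; rw [h0] at hc; simp at hc
    · rw [weightedTotalDegree]
      apply Finset.sup_le
      intro v hv
      rw [weight_w1]
      exact (hall v hv).1
    · rw [weightedTotalDegree]
      apply Finset.sup_le
      intro v hv
      rw [weight_w2]
      exact (hall v hv).2.1
    · intro v hv hne
      rcases (hall v hv).2.2 with h | h
      · exact absurd h hne
      · exact h

/-! #### Explicit computations with `Del'` -/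

lemma pderiv_ofNat' (i : Fin 6) (n : ℕ) [n.AtLeastTwo] :
    pderiv i (no_index (OfNat.ofNat n) : MvPolynomial (Fin 6) k) = 0 := by
  rw [← map_ofNat (C : k →+* MvPolynomial (Fin 6) k) n, pderiv_C]

lemma Del'_smul (c : k) (p : MvPolynomial (Fin 6) k) : Del' (c • p) = c • Del' p := by
  simp [Del', (pderiv _).map_smul, mul_smul_comm, smul_add]

lemma mono1 (i : Fin 6) (a : ℕ) (c : k) :
    monomial (Finsupp.single i a) c = C c * X i ^ a := by
  rw [C_mul_X_pow_eq_monomial]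

lemma mono2 (i j : Fin 6) (a b : ℕ) (c : k) :
    monomial (Finsupp.single i a + Finsupp.single j b) c = C c * X i ^ a * X j ^ b := by
  rw [monomial_add_single, ← C_mul_X_pow_eq_monomial]

lemma mono3 (i j l : Fin 6) (a b e : ℕ) (c : k) :
    monomial (Finsupp.single i a + Finsupp.single j b + Finsupp.single l e) c
      = C c * X i ^ a * X j ^ b * X l ^ e := by
  rw [monomial_add_single, monomial_add_single, ← C_mul_X_pow_eq_monomial]

/-- wdeg1/wdeg2/coordinates of explicit single-sums: handled by simp. -/
lemma single_app (i j : Fin 6) (a : ℕ) :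
    (Finsupp.single i a : Fin 6 →₀ ℕ) j = if i = j then a else 0 := Finsupp.single_apply

/-! Levels for `x1`. -/

lemma dX0_1 : Del' (X 0 : MvPolynomial (Fin 6) k) = -(2 * X 3 * X 4) := by
  simp [Del', pderiv_X, pderiv_ofNat', Pi.single_apply]

lemma dX0_2 : Del' (-(2 * X 3 * X 4) : MvPolynomial (Fin 6) k) = 2 * X 4 ^ 2 * X 5 := by
  simp [Del', pderiv_X, pderiv_ofNat', Pi.single_apply]
  ring

lemma dX0_3 : Del' (2 * X 4 ^ 2 * X 5 : MvPolynomial (Fin 6) k) = 0 := by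
  simp [Del', pderiv_X, pderiv_ofNat', Pi.single_apply]

/-! Levels for `x2`. -/

lemma dX1_1 : Del' (X 1 : MvPolynomial (Fin 6) k) = 4 * X 0 * X 3 - X 5 := by
  simp [Del', pderiv_X, pderiv_ofNat', Pi.single_apply]

lemma dX1_2 : Del' (4 * X 0 * X 3 - X 5 : MvPolynomial (Fin 6) k)
    = -(8 * X 3 ^ 2 * X 4) - 4 * X 0 * X 4 * X 5 := by
  simp [Del', pderiv_X, pderiv_ofNat', Pi.single_apply]
  ring

lemma dX1_3 : Del' (-(8 * X 3 ^ 2 * X 4) - 4 * X 0 * X 4 * X 5 : MvPolynomial (Fin 6) k)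
    = 24 * X 3 * X 4 ^ 2 * X 5 := by
  simp [Del', pderiv_X, pderiv_ofNat', Pi.single_apply]
  ring

lemma dX1_4 : Del' (24 * X 3 * X 4 ^ 2 * X 5 : MvPolynomial (Fin 6) k)
    = -(24 * X 4 ^ 3 * X 5 ^ 2) := by
  simp [Del', pderiv_X, pderiv_ofNat', Pi.single_apply]
  ring

lemma dX1_5 : Del' (-(24 * X 4 ^ 3 * X 5 ^ 2) : MvPolynomial (Fin 6) k) = 0 := by
  simp [Del', pderiv_X, pderiv_ofNat', Pi.single_apply]

/-! Levels for `x3`. -/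

lemma dX2_1 : Del' (X 2 : MvPolynomial (Fin 6) k) = 6 * X 1 * X 3 + 2 * X 4 ^ 2 := by
  simp [Del', pderiv_X, pderiv_ofNat', Pi.single_apply]

lemma dX2_2 : Del' (6 * X 1 * X 3 + 2 * X 4 ^ 2 : MvPolynomial (Fin 6) k)
    = 24 * X 0 * X 3 ^ 2 - 6 * X 3 * X 5 - 6 * X 1 * X 4 * X 5 := by
  simp [Del', pderiv_X, pderiv_ofNat', Pi.single_apply]
  ring

lemma dX2_3 : Del' (24 * X 0 * X 3 ^ 2 - 6 * X 3 * X 5 - 6 * X 1 * X 4 * X 5 :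
    MvPolynomial (Fin 6) k)
    = -(48 * X 3 ^ 3 * X 4) - 72 * X 0 * X 3 * X 4 * X 5 + 12 * X 4 * X 5 ^ 2 := by
  simp [Del', pderiv_X, pderiv_ofNat', Pi.single_apply]
  ring

lemma dX2_4 : Del' (-(48 * X 3 ^ 3 * X 4) - 72 * X 0 * X 3 * X 4 * X 5 + 12 * X 4 * X 5 ^ 2 :
    MvPolynomial (Fin 6) k)
    = 288 * X 3 ^ 2 * X 4 ^ 2 * X 5 + 72 * X 0 * X 4 ^ 2 * X 5 ^ 2 := by
  simp [Del', pderiv_X, pderiv_ofNat', Pi.single_apply]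
  ring

lemma dX2_5 : Del' (288 * X 3 ^ 2 * X 4 ^ 2 * X 5 + 72 * X 0 * X 4 ^ 2 * X 5 ^ 2 :
    MvPolynomial (Fin 6) k)
    = -(720 * X 3 * X 4 ^ 3 * X 5 ^ 2) := by
  simp [Del', pderiv_X, pderiv_ofNat', Pi.single_apply]
  ring

lemma dX2_6 : Del' (-(720 * X 3 * X 4 ^ 3 * X 5 ^ 2) : MvPolynomial (Fin 6) k)
    = 720 * X 4 ^ 4 * X 5 ^ 3 := by
  simp [Del', pderiv_X, pderiv_ofNat', Pi.single_apply]
  ring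

lemma dX2_7 : Del' (720 * X 4 ^ 4 * X 5 ^ 3 : MvPolynomial (Fin 6) k) = 0 := by
  simp [Del', pderiv_X, pderiv_ofNat', Pi.single_apply]

lemma mono4 (i j l o : Fin 6) (a b e f : ℕ) (c : k) :
    monomial (Finsupp.single i a + Finsupp.single j b + Finsupp.single l e
        + Finsupp.single o f) c
      = C c * X i ^ a * X j ^ b * X l ^ e * X o ^ f := by
  rw [monomial_add_single, monomial_add_single, monomial_add_single,
    ← C_mul_X_pow_eq_monomial]

/-! #### `Good` certificates for `φ'(x1), φ'(x2), φ'(x3)` -/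

variable [CharZero k]

lemma good_phi0 {u : k} (hu : u ≠ 0)
    {φ' : MvPolynomial (Fin 6) k ≃ₐ[k] MvPolynomial (Fin 6) k}
    (hφ' : IsExpOf (fun p => u • Del' p) φ') :
    Good 1 2 (tfMon 1 2) (φ' (X 0)) := by
  have e1 : (fun p : MvPolynomial (Fin 6) k => u • Del' p)^[1] (X 0)
      = u • (-(2 * X 3 * X 4)) := by
    rw [Function.iterate_one]; show u • Del' (X 0) = _; rw [dX0_1]
  have e2 : (fun p : MvPolynomial (Fin 6) k => u • Del' p)^[2] (X 0)
      = (u^2) • (2 * X 4 ^ 2 * X 5) := by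
    rw [Function.iterate_succ_apply', e1]
    show u • Del' _ = _
    rw [Del'_smul, dX0_2, smul_smul, show (u*u : k) = u^2 from (sq u).symm]
  have e3 : (fun p : MvPolynomial (Fin 6) k => u • Del' p)^[3] (X 0) = 0 := by
    rw [Function.iterate_succ_apply', e2]
    show u • Del' _ = _
    rw [Del'_smul, dX0_3, smul_zero, smul_zero]
  rw [hφ' (X 0) 3 e3]
  rw [Finset.sum_range_succ, Finset.sum_range_succ, Finset.sum_range_one]
  rw [Function.iterate_zero_apply, e1, e2]
  rw [show (Nat.factorial 0 : k) = 1 by norm_num [Nat.factorial],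
      show (Nat.factorial 1 : k) = 1 by norm_num [Nat.factorial],
      show (Nat.factorial 2 : k) = 2 by norm_num [Nat.factorial]]
  rw [inv_one, one_smul, one_smul, smul_smul]
  rw [show (-(2 * X 3 * X 4) : MvPolynomial (Fin 6) k)
      = monomial (Finsupp.single 3 1 + Finsupp.single 4 1) (-2 : k) by
    rw [mono2]; simp only [map_neg, map_ofNat]; ring]
  rw [show (2 * X 4 ^ 2 * X 5 : MvPolynomial (Fin 6) k)
      = monomial (tfMon 1 2) (2 : k) by
    rw [tfMon, mono2]; simp only [map_ofNat]; ring]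
  rw [show (X 0 : MvPolynomial (Fin 6) k) = monomial (Finsupp.single 0 1) (1 : k) by
    rw [mono1]; simp]
  rw [smul_monomial, smul_monomial, smul_eq_mul, smul_eq_mul]
  apply small_add_good (small_add ?_ ?_) ?_
  · apply small_monomial
    · simp [wdeg1, single_app]
    · simp [wdeg2, single_app]
    · apply cyclicLt_of_five
      simp [single_app, tfMon]
  · apply small_monomial
    · simp [wdeg1, single_app, Finsupp.add_apply]
    · simp [wdeg2, single_app, Finsupp.add_apply]
    · apply cyclicLt_of_five
      simp [single_app, tfMon, Finsupp.add_apply]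
  · have hc : ((2:k)⁻¹ * u ^ 2) * 2 ≠ 0 := by
      have : ((2:k)⁻¹ * u ^ 2) * 2 = u^2 := by field_simp
      rw [this]
      exact pow_ne_zero _ hu
    exact (good_monomial hc).mono (by rw [wdeg1_tfMon]) (by rw [wdeg2_tfMon])

lemma good_phi1 {u : k} (hu : u ≠ 0)
    {φ' : MvPolynomial (Fin 6) k ≃ₐ[k] MvPolynomial (Fin 6) k}
    (hφ' : IsExpOf (fun p => u • Del' p) φ') :
    Good 2 3 (tfMon 2 3) (φ' (X 1)) := by
  have e1 : (fun p : MvPolynomial (Fin 6) k => u • Del' p)^[1] (X 1)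
      = u • (4 * X 0 * X 3 - X 5) := by
    rw [Function.iterate_one]; show u • Del' (X 1) = _; rw [dX1_1]
  have e2 : (fun p : MvPolynomial (Fin 6) k => u • Del' p)^[2] (X 1)
      = (u^2) • (-(8 * X 3 ^ 2 * X 4) - 4 * X 0 * X 4 * X 5) := by
    rw [Function.iterate_succ_apply', e1]
    show u • Del' _ = _
    rw [Del'_smul, dX1_2, smul_smul, show (u*u : k) = u^2 from (sq u).symm]
  have e3 : (fun p : MvPolynomial (Fin 6) k => u • Del' p)^[3] (X 1)
      = (u^3) • (24 * X 3 * X 4 ^ 2 * X 5) := by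
    rw [Function.iterate_succ_apply', e2]
    show u • Del' _ = _
    rw [Del'_smul, dX1_3, smul_smul, show (u*u^2 : k) = u^3 by ring]
  have e4 : (fun p : MvPolynomial (Fin 6) k => u • Del' p)^[4] (X 1)
      = (u^4) • (-(24 * X 4 ^ 3 * X 5 ^ 2)) := by
    rw [Function.iterate_succ_apply', e3]
    show u • Del' _ = _
    rw [Del'_smul, dX1_4, smul_smul, show (u*u^3 : k) = u^4 by ring]
  have e5 : (fun p : MvPolynomial (Fin 6) k => u • Del' p)^[5] (X 1) = 0 := by
    rw [Function.iterate_succ_apply', e4]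
    show u • Del' _ = _
    rw [Del'_smul, dX1_5, smul_zero, smul_zero]
  rw [hφ' (X 1) 5 e5]
  rw [Finset.sum_range_succ, Finset.sum_range_succ, Finset.sum_range_succ,
    Finset.sum_range_succ, Finset.sum_range_one]
  rw [Function.iterate_zero_apply, e1, e2, e3, e4]
  rw [show (Nat.factorial 0 : k) = 1 by norm_num [Nat.factorial],
      show (Nat.factorial 1 : k) = 1 by norm_num [Nat.factorial],
      show (Nat.factorial 2 : k) = 2 by norm_num [Nat.factorial],
      show (Nat.factorial 3 : k) = 6 by norm_num [Nat.factorial],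
      show (Nat.factorial 4 : k) = 24 by norm_num [Nat.factorial]]
  rw [inv_one, one_smul, one_smul, smul_smul, smul_smul, smul_smul]
  rw [show (X 1 : MvPolynomial (Fin 6) k) = monomial (Finsupp.single 1 1) (1 : k) by
    rw [mono1]; simp]
  rw [show (4 * X 0 * X 3 - X 5 : MvPolynomial (Fin 6) k)
      = monomial (Finsupp.single 0 1 + Finsupp.single 3 1) (4 : k)
        + monomial (Finsupp.single 5 1) (-1 : k) by
    rw [mono2, mono1]; simp only [map_neg, map_ofNat, map_one]; ring]
  rw [show (-(8 * X 3 ^ 2 * X 4) - 4 * X 0 * X 4 * X 5 : MvPolynomial (Fin 6) k)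
      = monomial (Finsupp.single 3 2 + Finsupp.single 4 1) (-8 : k)
        + monomial (Finsupp.single 0 1 + Finsupp.single 4 1 + Finsupp.single 5 1) (-4 : k) by
    rw [mono2, mono3]; simp only [map_neg, map_ofNat]; ring]
  rw [show (24 * X 3 * X 4 ^ 2 * X 5 : MvPolynomial (Fin 6) k)
      = monomial (Finsupp.single 3 1 + Finsupp.single 4 2 + Finsupp.single 5 1) (24 : k) by
    rw [mono3]; simp only [map_ofNat]; ring]
  rw [show (-(24 * X 4 ^ 3 * X 5 ^ 2) : MvPolynomial (Fin 6) k)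
      = monomial (tfMon 2 3) (-24 : k) by
    rw [tfMon, mono2]; simp only [map_neg, map_ofNat]; ring]
  rw [smul_add, smul_add]
  simp only [smul_monomial, smul_eq_mul]
  apply small_add_good (small_add (small_add (small_add ?_ (small_add ?_ ?_))
    (small_add ?_ ?_)) ?_) ?_
  · apply small_monomial
    · simp [wdeg1, single_app]
    · simp [wdeg2, single_app]
    · exact cyclicLt_of_five (by simp [single_app, tfMon])
  · apply small_monomial
    · simp [wdeg1, single_app, Finsupp.add_apply]
    · simp [wdeg2, single_app, Finsupp.add_apply]
    · exact cyclicLt_of_five (by simp [single_app, tfMon, Finsupp.add_apply])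
  · apply small_monomial
    · simp [wdeg1, single_app]
    · simp [wdeg2, single_app]
    · exact cyclicLt_of_five (by simp [single_app, tfMon])
  · apply small_monomial
    · simp [wdeg1, single_app, Finsupp.add_apply]
    · simp [wdeg2, single_app, Finsupp.add_apply]
    · exact cyclicLt_of_five (by simp [single_app, tfMon, Finsupp.add_apply])
  · apply small_monomial
    · simp [wdeg1, single_app, Finsupp.add_apply]
    · simp [wdeg2, single_app, Finsupp.add_apply]
    · exact cyclicLt_of_five (by simp [single_app, tfMon, Finsupp.add_apply])
  · apply small_monomial
    · simp [wdeg1, single_app, Finsupp.add_apply]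
    · simp [wdeg2, single_app, Finsupp.add_apply]
    · exact cyclicLt_of_five (by simp [single_app, tfMon, Finsupp.add_apply])
  · have hc : ((24:k)⁻¹ * u ^ 4) * (-24) ≠ 0 := by
      have : ((24:k)⁻¹ * u ^ 4) * (-24) = -(u^4) := by field_simp
      rw [this, neg_ne_zero]
      exact pow_ne_zero _ hu
    exact (good_monomial hc).mono (by rw [wdeg1_tfMon]) (by rw [wdeg2_tfMon])

lemma good_phi2 {u : k} (hu : u ≠ 0)
    {φ' : MvPolynomial (Fin 6) k ≃ₐ[k] MvPolynomial (Fin 6) k}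
    (hφ' : IsExpOf (fun p => u • Del' p) φ') :
    Good 3 4 (tfMon 3 4) (φ' (X 2)) := by
  have e1 : (fun p : MvPolynomial (Fin 6) k => u • Del' p)^[1] (X 2)
      = u • (6 * X 1 * X 3 + 2 * X 4 ^ 2) := by
    rw [Function.iterate_one]; show u • Del' (X 2) = _; rw [dX2_1]
  have e2 : (fun p : MvPolynomial (Fin 6) k => u • Del' p)^[2] (X 2)
      = (u^2) • (24 * X 0 * X 3 ^ 2 - 6 * X 3 * X 5 - 6 * X 1 * X 4 * X 5) := by
    rw [Function.iterate_succ_apply', e1]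
    show u • Del' _ = _
    rw [Del'_smul, dX2_2, smul_smul, show (u*u : k) = u^2 from (sq u).symm]
  have e3 : (fun p : MvPolynomial (Fin 6) k => u • Del' p)^[3] (X 2)
      = (u^3) • (-(48 * X 3 ^ 3 * X 4) - 72 * X 0 * X 3 * X 4 * X 5 + 12 * X 4 * X 5 ^ 2) := by
    rw [Function.iterate_succ_apply', e2]
    show u • Del' _ = _
    rw [Del'_smul, dX2_3, smul_smul, show (u*u^2 : k) = u^3 by ring]
  have e4 : (fun p : MvPolynomial (Fin 6) k => u • Del' p)^[4] (X 2)
      = (u^4) • (288 * X 3 ^ 2 * X 4 ^ 2 * X 5 + 72 * X 0 * X 4 ^ 2 * X 5 ^ 2) := by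
    rw [Function.iterate_succ_apply', e3]
    show u • Del' _ = _
    rw [Del'_smul, dX2_4, smul_smul, show (u*u^3 : k) = u^4 by ring]
  have e5 : (fun p : MvPolynomial (Fin 6) k => u • Del' p)^[5] (X 2)
      = (u^5) • (-(720 * X 3 * X 4 ^ 3 * X 5 ^ 2)) := by
    rw [Function.iterate_succ_apply', e4]
    show u • Del' _ = _
    rw [Del'_smul, dX2_5, smul_smul, show (u*u^4 : k) = u^5 by ring]
  have e6 : (fun p : MvPolynomial (Fin 6) k => u • Del' p)^[6] (X 2)
      = (u^6) • (720 * X 4 ^ 4 * X 5 ^ 3) := by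
    rw [Function.iterate_succ_apply', e5]
    show u • Del' _ = _
    rw [Del'_smul, dX2_6, smul_smul, show (u*u^5 : k) = u^6 by ring]
  have e7 : (fun p : MvPolynomial (Fin 6) k => u • Del' p)^[7] (X 2) = 0 := by
    rw [Function.iterate_succ_apply', e6]
    show u • Del' _ = _
    rw [Del'_smul, dX2_7, smul_zero, smul_zero]
  rw [hφ' (X 2) 7 e7]
  rw [Finset.sum_range_succ, Finset.sum_range_succ, Finset.sum_range_succ,
    Finset.sum_range_succ, Finset.sum_range_succ, Finset.sum_range_succ, Finset.sum_range_one]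
  rw [Function.iterate_zero_apply, e1, e2, e3, e4, e5, e6]
  rw [show (Nat.factorial 0 : k) = 1 by norm_num [Nat.factorial],
      show (Nat.factorial 1 : k) = 1 by norm_num [Nat.factorial],
      show (Nat.factorial 2 : k) = 2 by norm_num [Nat.factorial],
      show (Nat.factorial 3 : k) = 6 by norm_num [Nat.factorial],
      show (Nat.factorial 4 : k) = 24 by norm_num [Nat.factorial],
      show (Nat.factorial 5 : k) = 120 by norm_num [Nat.factorial],
      show (Nat.factorial 6 : k) = 720 by norm_num [Nat.factorial]]
  rw [inv_one, one_smul, one_smul, smul_smul, smul_smul, smul_smul, smul_smul, smul_smul]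
  rw [show (X 2 : MvPolynomial (Fin 6) k) = monomial (Finsupp.single 2 1) (1 : k) by
    rw [mono1]; simp]
  rw [show (6 * X 1 * X 3 + 2 * X 4 ^ 2 : MvPolynomial (Fin 6) k)
      = monomial (Finsupp.single 1 1 + Finsupp.single 3 1) (6 : k)
        + monomial (Finsupp.single 4 2) (2 : k) by
    rw [mono2, mono1]; simp only [map_ofNat]; ring]
  rw [show (24 * X 0 * X 3 ^ 2 - 6 * X 3 * X 5 - 6 * X 1 * X 4 * X 5 : MvPolynomial (Fin 6) k)
      = monomial (Finsupp.single 0 1 + Finsupp.single 3 2) (24 : k)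
        + monomial (Finsupp.single 3 1 + Finsupp.single 5 1) (-6 : k)
        + monomial (Finsupp.single 1 1 + Finsupp.single 4 1 + Finsupp.single 5 1) (-6 : k) by
    rw [mono2, mono2, mono3]; simp only [map_neg, map_ofNat]; ring]
  rw [show (-(48 * X 3 ^ 3 * X 4) - 72 * X 0 * X 3 * X 4 * X 5 + 12 * X 4 * X 5 ^ 2 :
        MvPolynomial (Fin 6) k)
      = monomial (Finsupp.single 3 3 + Finsupp.single 4 1) (-48 : k)
        + monomial (Finsupp.single 0 1 + Finsupp.single 3 1 + Finsupp.single 4 1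
            + Finsupp.single 5 1) (-72 : k)
        + monomial (Finsupp.single 4 1 + Finsupp.single 5 2) (12 : k) by
    rw [mono2, mono4, mono2]; simp only [map_neg, map_ofNat]; ring]
  rw [show (288 * X 3 ^ 2 * X 4 ^ 2 * X 5 + 72 * X 0 * X 4 ^ 2 * X 5 ^ 2 :
        MvPolynomial (Fin 6) k)
      = monomial (Finsupp.single 3 2 + Finsupp.single 4 2 + Finsupp.single 5 1) (288 : k)
        + monomial (Finsupp.single 0 1 + Finsupp.single 4 2 + Finsupp.single 5 2) (72 : k) by
    rw [mono3, mono3]; simp only [map_ofNat]; ring]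
  rw [show (-(720 * X 3 * X 4 ^ 3 * X 5 ^ 2) : MvPolynomial (Fin 6) k)
      = monomial (Finsupp.single 3 1 + Finsupp.single 4 3 + Finsupp.single 5 2) (-720 : k) by
    rw [mono3]; simp only [map_neg, map_ofNat]; ring]
  rw [show (720 * X 4 ^ 4 * X 5 ^ 3 : MvPolynomial (Fin 6) k)
      = monomial (tfMon 3 4) (720 : k) by
    rw [tfMon, mono2]; simp only [map_ofNat]; try ring]
  simp only [smul_add, smul_monomial, smul_eq_mul]
  apply small_add_good (small_add (small_add (small_add (small_add
    (small_add ?_ (small_add ?_ ?_)) (small_add (small_add ?_ ?_) ?_))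
    (small_add (small_add ?_ ?_) ?_)) (small_add ?_ ?_)) ?_) ?_
  case _ => -- X 2
    apply small_monomial
    · simp [wdeg1, single_app]
    · simp [wdeg2, single_app]
    · exact cyclicLt_of_five (by simp [single_app, tfMon])
  case _ => -- 6 x2 tr
    apply small_monomial
    · simp [wdeg1, single_app, Finsupp.add_apply]
    · simp [wdeg2, single_app, Finsupp.add_apply]
    · exact cyclicLt_of_five (by simp [single_app, tfMon, Finsupp.add_apply])
  case _ => -- 2 tf^2
    apply small_monomial
    · simp [wdeg1, single_app]
    · simp [wdeg2, single_app]
    · exact cyclicLt_of_five (by simp [single_app, tfMon])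
  case _ => -- 24 x1 tr^2
    apply small_monomial
    · simp [wdeg1, single_app, Finsupp.add_apply]
    · simp [wdeg2, single_app, Finsupp.add_apply]
    · exact cyclicLt_of_five (by simp [single_app, tfMon, Finsupp.add_apply])
  case _ => -- -6 tr tg
    apply small_monomial
    · simp [wdeg1, single_app, Finsupp.add_apply]
    · simp [wdeg2, single_app, Finsupp.add_apply]
    · exact cyclicLt_of_five (by simp [single_app, tfMon, Finsupp.add_apply])
  case _ => -- -6 x2 tf tg
    apply small_monomial
    · simp [wdeg1, single_app, Finsupp.add_apply]
    · simp [wdeg2, single_app, Finsupp.add_apply]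
    · exact cyclicLt_of_five (by simp [single_app, tfMon, Finsupp.add_apply])
  case _ => -- -48 tr^3 tf
    apply small_monomial
    · simp [wdeg1, single_app, Finsupp.add_apply]
    · simp [wdeg2, single_app, Finsupp.add_apply]
    · exact cyclicLt_of_five (by simp [single_app, tfMon, Finsupp.add_apply])
  case _ => -- -72 x1 tr tf tg
    apply small_monomial
    · simp [wdeg1, single_app, Finsupp.add_apply]
    · simp [wdeg2, single_app, Finsupp.add_apply]
    · exact cyclicLt_of_five (by simp [single_app, tfMon, Finsupp.add_apply])
  case _ => -- 12 tf tg^2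
    apply small_monomial
    · simp [wdeg1, single_app, Finsupp.add_apply]
    · simp [wdeg2, single_app, Finsupp.add_apply]
    · exact cyclicLt_of_five (by simp [single_app, tfMon, Finsupp.add_apply])
  case _ => -- 288 tr^2 tf^2 tg
    apply small_monomial
    · simp [wdeg1, single_app, Finsupp.add_apply]
    · simp [wdeg2, single_app, Finsupp.add_apply]
    · exact cyclicLt_of_five (by simp [single_app, tfMon, Finsupp.add_apply])
  case _ => -- 72 x1 tf^2 tg^2
    apply small_monomial
    · simp [wdeg1, single_app, Finsupp.add_apply]
    · simp [wdeg2, single_app, Finsupp.add_apply]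
    · exact cyclicLt_of_five (by simp [single_app, tfMon, Finsupp.add_apply])
  case _ => -- -720 tr tf^3 tg^2
    apply small_monomial
    · simp [wdeg1, single_app, Finsupp.add_apply]
    · simp [wdeg2, single_app, Finsupp.add_apply]
    · exact cyclicLt_of_five (by simp [single_app, tfMon, Finsupp.add_apply])
  case _ => -- lead
    have hc : ((720:k)⁻¹ * u ^ 6) * 720 ≠ 0 := by
      have : ((720:k)⁻¹ * u ^ 6) * 720 = u^6 := by field_simp
      rw [this]
      exact pow_ne_zero _ hu
    exact (good_monomial hc).mono (by rw [wdeg1_tfMon]) (by rw [wdeg2_tfMon])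


/-! #### Columns of affine maps -/

lemma small_C {γ δ : ℕ} (cd : k) (hγ : 1 ≤ γ) : Small γ δ (tfMon γ δ) (C cd) := by
  rw [show (C cd : MvPolynomial (Fin 6) k) = monomial 0 cd from rfl]
  apply small_monomial
  · simp [wdeg1]
  · simp [wdeg2]
  · exact cyclicLt_of_five (by simp [(tfMon_apply γ δ).2.2.2.2.2]; omega)

lemma good_col {q0 q1 q2 : MvPolynomial (Fin 6) k}
    (h0 : Good 1 2 (tfMon 1 2) q0) (h1 : Good 2 3 (tfMon 2 3) q1)
    (h2 : Good 3 4 (tfMon 3 4) q2)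
    (c : Fin 3 → k) (cd : k) (r : Fin 3) (hr : c r ≠ 0) (hz : ∀ i, r < i → c i = 0) :
    Good ((r:ℕ)+1) ((r:ℕ)+2) (tfMon ((r:ℕ)+1) ((r:ℕ)+2))
      (C (c 0) * q0 + C (c 1) * q1 + C (c 2) * q2 + C cd) := by
  fin_cases r
  · rw [hz 1 (by decide), hz 2 (by decide)]
    rw [map_zero, zero_mul, zero_mul, add_zero, add_zero]
    exact (h0.smulC hr).add_small (small_C cd (by norm_num))
  · rw [hz 2 (by decide), map_zero, zero_mul, add_zero]
    refine Good.add_small (small_add_good ?_ (h1.smulC hr)) (small_C cd (by norm_num))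
    exact small_smulC _ (h0.small_of_lt (by norm_num) (by norm_num)
      (tfMon_lt_tfMon (Or.inl (by norm_num))))
  · refine Good.add_small (small_add_good (small_add ?_ ?_) (h2.smulC hr))
      (small_C cd (by norm_num))
    · exact small_smulC _ (h0.small_of_lt (by norm_num) (by norm_num)
        (tfMon_lt_tfMon (Or.inl (by norm_num))))
    · exact small_smulC _ (h1.small_of_lt (by norm_num) (by norm_num)
        (tfMon_lt_tfMon (Or.inl (by norm_num))))

/-! #### Sums of `tfMon` -/

lemma tfMon_sum {ι : Type*} [DecidableEq ι] (s : Finset ι) (f g : ι → ℕ) :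
    ∑ i ∈ s, tfMon (f i) (g i) = tfMon (∑ i ∈ s, f i) (∑ i ∈ s, g i) := by
  induction s using Finset.induction_on with
  | empty => simp [tfMon_zero]
  | insert _ _ hx ih =>
    rename_i x s
    rw [Finset.sum_insert hx, Finset.sum_insert hx, Finset.sum_insert hx, ih, tfMon_add]

/-! #### The key arithmetic estimate -/

lemma key_arith {γ δ γ1 γ2 γ3 m4 m5 m6 n4 n5 n6 e0 e1 e2 e3 e4 e5 : ℕ}
    (hγ : 1 ≤ γ) (hδ : 1 ≤ δ) (hn5 : 1 ≤ n5) (hn6 : 1 ≤ n6)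
    (hc2a : γ1 ≤ m6) (hc2b : γ2 ≤ 2*m6) (hc2c : γ3 ≤ 3*m6) (hc2d : m4 ≤ m6)
    (hc3a : γ1 + 1 ≤ n6 - 1) (hc3b : γ2 + 1 ≤ 2*(n6-1)) (hc3c : γ3 + 1 ≤ 3*(n6-1))
    (hc3d : n4 ≤ n6 - 1)
    (hw1 : e0+2*e1+3*e2+e3+e5 ≤ γ) (hw2 : e4 ≤ δ)
    (hcase : e5 < γ ∨ (e5 = γ ∧ e0=0 ∧ e1=0 ∧ e2=0 ∧ e3=0 ∧ e4 < δ)) :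
    e0*γ1+e1*γ2+e2*γ3+e3*m4+e4*m5+e5*m6 ≤ m5*δ+m6*γ ∧
    e0*(γ1+1)+e1*(γ2+1)+e2*(γ3+1)+e3*n4+e4*n5+e5*n6 < n5*δ+n6*γ := by
  constructor
  · calc e0*γ1+e1*γ2+e2*γ3+e3*m4+e4*m5+e5*m6
        ≤ e0*m6+e1*(2*m6)+e2*(3*m6)+e3*m6+e4*m5+e5*m6 := by gcongr
      _ = m6*(e0+2*e1+3*e2+e3+e5) + m5*e4 := by ring
      _ ≤ m6*γ + m5*δ := by gcongr
      _ = m5*δ+m6*γ := by ring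
  · obtain ⟨M, rfl⟩ : ∃ M, n6 = M + 1 := ⟨n6-1, by omega⟩
    simp only [Nat.add_sub_cancel] at hc3a hc3b hc3c hc3d
    rcases hcase with h | ⟨h5, h0, h1, h2, h3, h4⟩
    · calc e0*(γ1+1)+e1*(γ2+1)+e2*(γ3+1)+e3*n4+e4*n5+e5*(M+1)
          ≤ e0*M+e1*(2*M)+e2*(3*M)+e3*M+e4*n5+e5*(M+1) := by gcongr
        _ = M*(e0+2*e1+3*e2+e3+e5) + e5 + n5*e4 := by ring
        _ ≤ M*γ + e5 + n5*δ := by gcongr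
        _ < M*γ + γ + n5*δ := by omega
        _ = n5*δ+(M+1)*γ := by ring
    · have h6 : e4*n5 + n5 ≤ n5*δ := by
        calc e4*n5 + n5 = n5*(e4+1) := by ring
          _ ≤ n5*δ := by gcongr; omega
      rw [h0, h1, h2, h3, h5]
      simp only [Nat.zero_mul, Nat.zero_add]
      rw [mul_comm γ (M+1)]
      omega

end Aux

/-- (Lemma 2 of the paper.)  If a lift `α'` of
`α ∈ Aff_3(k) \ B` (of type `(γ1,γ2,γ3)`) satisfies condition (C) with data
`m4,m5,m6 ≥ 0`, `n4,n5,n6 ≥ 1`, then for `γ' = m5·δ + m6·γ` and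
`δ' = n5·δ + n6·γ` one has `γ' ≥ γ`, `δ' ≥ δ` and
`(φ'_u ∘ α')(P_{γ,δ}) ⊆ P_{γ',δ'}`. -/
theorem statement13 [CharZero k]
    (hln6 : ∀ p : MvPolynomial (Fin 6) k, ∃ l : ℕ, Del'^[l] p = 0)
    (u : k) (hu : u ≠ 0)
    (φ' : MvPolynomial (Fin 6) k ≃ₐ[k] MvPolynomial (Fin 6) k)
    (hφ' : IsExpOf (fun p => u • Del' p) φ')
    (γ δ : ℕ) (hγ : 1 ≤ γ) (hδ : 1 ≤ δ)
    (α : MvPolynomial (Fin 3) k ≃ₐ[k] MvPolynomial (Fin 3) k)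
    (A : Matrix (Fin 3) (Fin 3) k) (d : Fin 3 → k)
    (hdet : IsUnit A.det)
    (hαA : ∀ i : Fin 3, α (X i) = (∑ j : Fin 3, C (A j i) * X j) + C (d i))
    (hαB : α ∉ BSet)
    (γ1 γ2 γ3 : ℕ)
    (ht1 : TypeIs A 0 γ1) (ht2 : TypeIs A 1 γ2) (ht3 : TypeIs A 2 γ3)
    (α' : MvPolynomial (Fin 6) k →ₐ[k] MvPolynomial (Fin 6) k)
    (hlift : IsLift α α')
    (m4 m5 m6 n4 n5 n6 : ℕ)
    (hn4 : 1 ≤ n4) (hn5 : 1 ≤ n5) (hn6 : 1 ≤ n6)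
    (hc1r : φ' (α' (X 3)) ∈ Pset m4 n4)
    (hc1f : φ' (α' (X 4)) ∈ Pset m5 n5)
    (hc1g : φ' (α' (X 5)) ∈ Pset m6 n6)
    (hc2a : γ1 ≤ m6) (hc2b : γ2 ≤ 2 * m6) (hc2c : γ3 ≤ 3 * m6) (hc2d : m4 ≤ m6)
    (hc3a : γ1 + 1 ≤ n6 - 1) (hc3b : γ2 + 1 ≤ 2 * (n6 - 1))
    (hc3c : γ3 + 1 ≤ 3 * (n6 - 1)) (hc3d : n4 ≤ n6 - 1) :
    γ ≤ m5 * δ + m6 * γ ∧ δ ≤ n5 * δ + n6 * γ ∧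
      ∀ p ∈ Pset γ δ, φ' (α' p) ∈ Pset (m5 * δ + m6 * γ) (n5 * δ + n6 * γ) := by
  classical
  obtain ⟨r1, hr1, hA1, hz1⟩ := ht1
  obtain ⟨r2, hr2, hA2, hz2⟩ := ht2
  obtain ⟨r3, hr3, hA3, hz3⟩ := ht3
  have hγ1 : 1 ≤ γ1 := by omega
  have hm6 : 1 ≤ m6 := hγ1.trans hc2a
  refine ⟨?_, ?_, ?_⟩
  · calc γ = 1 * γ := (one_mul γ).symm
      _ ≤ m6 * γ := Nat.mul_le_mul_right γ hm6
      _ ≤ m5 * δ + m6 * γ := Nat.le_add_left _ _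
  · calc δ = 1 * δ := (one_mul δ).symm
      _ ≤ n5 * δ := Nat.mul_le_mul_right δ hn5
      _ ≤ n5 * δ + n6 * γ := Nat.le_add_right _ _
  intro p hp
  rw [mem_Pset_iff_good] at hp ⊢
  -- `φ' ∘ α'` as an algebra homomorphism
  have hφC : ∀ c : k, φ' (C c) = C c := fun c => by
    rw [← algebraMap_eq (R := k) (σ := Fin 6)]
    exact φ'.commutes c
  have hX0 : (X (ι36 0) : MvPolynomial (Fin 6) k) = X 0 := rfl
  have hX1 : (X (ι36 1) : MvPolynomial (Fin 6) k) = X 1 := rfl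
  have hX2 : (X (ι36 2) : MvPolynomial (Fin 6) k) = X 2 := rfl
  -- the images of the first three variables
  have hcol : ∀ (j : Fin 3) (r : Fin 3), A r j ≠ 0 → (∀ i, r < i → A i j = 0) →
      Good ((r:ℕ)+1) ((r:ℕ)+2) (tfMon ((r:ℕ)+1) ((r:ℕ)+2)) (φ' (α' (X (ι36 j)))) := by
    intro j r hr hz
    have h1 : α' (X (ι36 j)) = C (A 0 j) * X (0 : Fin 6) + C (A 1 j) * X (1 : Fin 6)
        + C (A 2 j) * X (2 : Fin 6) + C (d j) := by
      rw [hlift.1 j, hαA j, Fin.sum_univ_three]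
      simp only [map_add, map_mul, embP, rename_C, rename_X]
      rw [hX0, hX1, hX2]
    have h2 : φ' (α' (X (ι36 j))) = C (A 0 j) * φ' (X 0) + C (A 1 j) * φ' (X 1)
        + C (A 2 j) * φ' (X 2) + C (d j) := by
      rw [h1]
      simp only [map_add, map_mul, hφC]
    rw [h2]
    exact good_col (good_phi0 hu hφ') (good_phi1 hu hφ') (good_phi2 hu hφ')
      (fun i => A i j) (d j) r hr hz
  -- `Good` data for all six variables
  set av : Fin 6 → ℕ := ![γ1, γ2, γ3, m4, m5, m6] with hav
  set bv : Fin 6 → ℕ := ![γ1+1, γ2+1, γ3+1, n4, n5, n6] with hbv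
  have hGall : ∀ i : Fin 6, Good (av i) (bv i) (tfMon (av i) (bv i)) (φ' (α' (X i))) := by
    intro i
    fin_cases i
    · show Good γ1 (γ1+1) (tfMon γ1 (γ1+1)) _
      rw [hr1]
      have := hcol 0 r1 hA1 hz1
      rwa [hX0] at this
    · show Good γ2 (γ2+1) (tfMon γ2 (γ2+1)) _
      rw [hr2]
      have := hcol 1 r2 hA2 hz2
      rwa [hX1] at this
    · show Good γ3 (γ3+1) (tfMon γ3 (γ3+1)) _
      rw [hr3]
      have := hcol 2 r3 hA3 hz3
      rwa [hX2] at this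
    · exact mem_Pset_iff_good.mp hc1r
    · exact mem_Pset_iff_good.mp hc1f
    · exact mem_Pset_iff_good.mp hc1g
  -- expansion of `φ'(α'(p))` over the support of `p`
  set ψ : MvPolynomial (Fin 6) k →ₐ[k] MvPolynomial (Fin 6) k := φ'.toAlgHom.comp α' with hψdef
  have hexp : φ' (α' p) = ∑ e ∈ p.support,
      C (coeff e p) * ∏ i : Fin 6, (φ' (α' (X i))) ^ (e i) := by
    show ψ p = _
    conv_lhs => rw [aeval_unique ψ]
    rw [aeval_def, eval₂_eq' (algebraMap k (MvPolynomial (Fin 6) k)) (⇑ψ ∘ X) p]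
    rfl
  rw [hexp]
  -- each term of the expansion is `Good`
  have hterm : ∀ e : Fin 6 →₀ ℕ, e ∈ p.support →
      Good (∑ i : Fin 6, e i * av i) (∑ i : Fin 6, e i * bv i)
        (tfMon (∑ i : Fin 6, e i * av i) (∑ i : Fin 6, e i * bv i))
        (C (coeff e p) * ∏ i : Fin 6, (φ' (α' (X i))) ^ (e i)) := by
    intro e he
    apply Good.smulC (mem_support_iff.mp he)
    have := good_prod (s := Finset.univ) (a := fun i => e i * av i)
      (b := fun i => e i * bv i)
      (m := fun i => tfMon (e i * av i) (e i * bv i))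
      (f := fun i => (φ' (α' (X i))) ^ (e i))
      (fun i _ => by
        have := (hGall i).pow (e i)
        rwa [tfMon_smul] at this)
    rwa [tfMon_sum] at this
  -- sums over the six coordinates
  have havs : ∀ e : Fin 6 →₀ ℕ, (∑ i : Fin 6, e i * av i)
      = e 0 * γ1 + e 1 * γ2 + e 2 * γ3 + e 3 * m4 + e 4 * m5 + e 5 * m6 := by
    intro e; rw [Fin.sum_univ_six]; rfl
  have hbvs : ∀ e : Fin 6 →₀ ℕ, (∑ i : Fin 6, e i * bv i)
      = e 0 * (γ1+1) + e 1 * (γ2+1) + e 2 * (γ3+1) + e 3 * n4 + e 4 * n5 + e 5 * n6 := by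
    intro e; rw [Fin.sum_univ_six]; rfl
  have hleadsum1 : (∑ i : Fin 6, (tfMon γ δ) i * av i) = m5 * δ + m6 * γ := by
    rw [havs]
    obtain ⟨t0, t1, t2, t3, t4, t5⟩ := tfMon_apply γ δ
    rw [t0, t1, t2, t3, t4, t5]
    ring
  have hleadsum2 : (∑ i : Fin 6, (tfMon γ δ) i * bv i) = n5 * δ + n6 * γ := by
    rw [hbvs]
    obtain ⟨t0, t1, t2, t3, t4, t5⟩ := tfMon_apply γ δ
    rw [t0, t1, t2, t3, t4, t5]
    ring
  -- assemble
  apply good_sum (i0 := tfMon γ δ) (mem_support_iff.mpr hp.1)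
  · have := hterm (tfMon γ δ) (mem_support_iff.mpr hp.1)
    rwa [hleadsum1, hleadsum2] at this
  · intro e he hne
    have hbound := hp.2 e he
    have hcase := cyclicLt_tfMon_cases (hbound.2.2.resolve_left hne)
    have hw1e : e 0 + 2*(e 1) + 3*(e 2) + e 3 + e 5 ≤ γ := hbound.1
    have hw2e : e 4 ≤ δ := hbound.2.1
    obtain ⟨hG, hH⟩ := key_arith hγ hδ hn5 hn6 hc2a hc2b hc2c hc2d hc3a hc3b hc3c hc3d
      hw1e hw2e hcase
    have hGe := hterm e he
    rw [havs, hbvs] at hGe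
    exact hGe.small_of_lt hG (le_of_lt hH) (tfMon_lt_tfMon (by omega))


end YasudaPaper
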